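/- Let Q₃ be a nonnegative quadratic form on 3×3 real matrices that depends only on the symmetric part of its argument and is positive definite on symmetric matrices, and let A ∈ ℝ^{3×3} be symmetric positive definite. Define, for F ∈ ℝ^{2×2}, Q₂(F) = min{ Q₃(A^{−1} F̃ A^{−1}) : F̃ ∈ ℝ^{3×3}, F̃_{2×2} = F }, where F̃_{2×2} is the principal 2×2 minor. Then Q₂ is a nonnegative quadratic form on ℝ^{2×2}, depends only on the symmetric part of F, and is positive definite on symmetric 2×2 matrices. -/

import Mathlib

open Matrix

/-- If `Q₃` is a nonnegative quadratic form on `3×3` matrices depending only on the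
symmetric part and positive definite on symmetric matrices, and `A` is symmetric
positive definite, then the reduced form
`Q₂(F) = min{Q₃(A⁻¹F̃A⁻¹) : F̃_{2×2} = F}` is a nonnegative quadratic form on
`2×2` matrices, depends only on the symmetric part, and is positive definite on
symmetric `2×2` matrices. -/
theorem reduced_quadratic_form_properties
    (Q3 : Matrix (Fin 3) (Fin 3) ℝ → ℝ)
    (hquad : ∃ B : Matrix (Fin 3) (Fin 3) ℝ →ₗ[ℝ] Matrix (Fin 3) (Fin 3) ℝ →ₗ[ℝ] ℝ,
      (∀ X Y, B X Y = B Y X) ∧ ∀ X, Q3 X = B X X)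
    (hsym : ∀ X : Matrix (Fin 3) (Fin 3) ℝ, Q3 X = Q3 ((1/2 : ℝ) • (X + Xᵀ)))
    (hnonneg : ∀ X, 0 ≤ Q3 X)
    (hposdef : ∀ X : Matrix (Fin 3) (Fin 3) ℝ, Xᵀ = X → X ≠ 0 → 0 < Q3 X)
    (A : Matrix (Fin 3) (Fin 3) ℝ) (hA : A.PosDef)
    (Q2 : Matrix (Fin 2) (Fin 2) ℝ → ℝ)
    (hQ2 : ∀ F : Matrix (Fin 2) (Fin 2) ℝ,
      IsLeast {r : ℝ | ∃ Ft : Matrix (Fin 3) (Fin 3) ℝ,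
        (∀ i j : Fin 2, Ft (Fin.castSucc i) (Fin.castSucc j) = F i j) ∧
        r = Q3 (A⁻¹ * Ft * A⁻¹)} (Q2 F)) :
    (∃ B2 : Matrix (Fin 2) (Fin 2) ℝ →ₗ[ℝ] Matrix (Fin 2) (Fin 2) ℝ →ₗ[ℝ] ℝ,
      (∀ X Y, B2 X Y = B2 Y X) ∧ ∀ F, Q2 F = B2 F F) ∧
    (∀ F, 0 ≤ Q2 F) ∧
    (∀ F : Matrix (Fin 2) (Fin 2) ℝ, Q2 F = Q2 ((1/2 : ℝ) • (F + Fᵀ))) ∧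
    (∀ F : Matrix (Fin 2) (Fin 2) ℝ, Fᵀ = F → F ≠ 0 → 0 < Q2 F) := by
  obtain ⟨B, hBsymm, hBQ⟩ := hquad
  have hAsym : Aᵀ = A := by simpa using hA.1.eq
  have hAdet : IsUnit A.det := isUnit_iff_ne_zero.mpr hA.det_pos.ne'
  have hA1 : A * A⁻¹ = 1 := Matrix.mul_nonsing_inv A hAdet
  have hA2 : A⁻¹ * A = 1 := Matrix.nonsing_inv_mul A hAdet
  have hAinv : (A⁻¹)ᵀ = A⁻¹ := by rw [Matrix.transpose_nonsing_inv, hAsym]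
  -- conjugation linear map
  set C : Matrix (Fin 3) (Fin 3) ℝ →ₗ[ℝ] Matrix (Fin 3) (Fin 3) ℝ :=
    { toFun := fun X => A⁻¹ * X * A⁻¹
      map_add' := fun X Y => by simp [Matrix.mul_add, Matrix.add_mul]
      map_smul' := fun c X => by simp [Matrix.mul_smul, Matrix.smul_mul] } with hC
  have hCapp : ∀ X, C X = A⁻¹ * X * A⁻¹ := fun X => rfl
  -- transpose conjugation lemma
  have hconjsym : ∀ Z : Matrix (Fin 3) (Fin 3) ℝ,
      (1/2 : ℝ) • (A⁻¹ * Z * A⁻¹ + (A⁻¹ * Z * A⁻¹)ᵀ)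
        = A⁻¹ * ((1/2 : ℝ) • (Z + Zᵀ)) * A⁻¹ := by
    intro Z
    rw [Matrix.transpose_mul, Matrix.transpose_mul, hAinv]
    simp [Matrix.mul_assoc, Matrix.mul_add, Matrix.add_mul, Matrix.mul_smul,
      Matrix.smul_mul]
  have hQ3conj : ∀ X Y : Matrix (Fin 3) (Fin 3) ℝ,
      (1/2 : ℝ) • (X + Xᵀ) = (1/2 : ℝ) • (Y + Yᵀ) →
      Q3 (A⁻¹ * X * A⁻¹) = Q3 (A⁻¹ * Y * A⁻¹) := by
    intro X Y h
    rw [hsym (A⁻¹ * X * A⁻¹), hsym (A⁻¹ * Y * A⁻¹), hconjsym X, hconjsym Y, h]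
  -- expansion lemma
  have hexp : ∀ (X Y : Matrix (Fin 3) (Fin 3) ℝ) (t : ℝ),
      B (C (X + t • Y)) (C (X + t • Y))
        = B (C X) (C X) + 2 * t * B (C X) (C Y) + t ^ 2 * B (C Y) (C Y) := by
    intro X Y t
    rw [map_add, C.map_smul]
    simp only [map_add, LinearMap.add_apply, LinearMap.map_smul,
      LinearMap.smul_apply, smul_eq_mul]
    rw [hBsymm (C Y) (C X)]
    ring
  have key : ∀ c d : ℝ, 0 ≤ d → (∀ t : ℝ, 0 ≤ 2 * t * c + t ^ 2 * d) → c = 0 := by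
    intro c d hd h
    by_contra hc
    have hd1 : (0:ℝ) < d + 1 := by linarith
    set u := c / (d + 1) with hu
    have hcu : c = u * (d + 1) := by rw [hu, div_mul_cancel₀ _ hd1.ne']
    have hune : u ≠ 0 := fun h0 => hc (by rw [hcu, h0, zero_mul])
    have h1 := h (-u)
    rw [hcu] at h1
    nlinarith [mul_pos (mul_self_pos.mpr hune) hd1,
      mul_nonneg (mul_self_nonneg u) hd]
  -- the orthogonal subspace
  set U : Submodule ℝ (Matrix (Fin 3) (Fin 3) ℝ) :=
    { carrier := {M | ∀ G : Matrix (Fin 3) (Fin 3) ℝ,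
        (∀ i j : Fin 2, G (Fin.castSucc i) (Fin.castSucc j) = 0) → B (C M) (C G) = 0}
      add_mem' := fun {a b} ha hb G hG => by
        simp [map_add, LinearMap.add_apply, ha G hG, hb G hG]
      zero_mem' := fun G hG => by simp
      smul_mem' := fun c a ha G hG => by
        simp [LinearMap.map_smul, LinearMap.smul_apply, ha G hG] } with hU
  -- every F admits a minimizer in U
  have hmemU : ∀ F : Matrix (Fin 2) (Fin 2) ℝ, ∃ M, M ∈ U ∧
      (∀ i j : Fin 2, M (Fin.castSucc i) (Fin.castSucc j) = F i j) ∧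
      Q2 F = B (C M) (C M) := by
    intro F
    obtain ⟨⟨Ft, hFt, hval⟩, hlb⟩ := hQ2 F
    refine ⟨Ft, ?_, hFt, by rw [hval, hBQ, hCapp]⟩
    intro G hG
    have hd : 0 ≤ B (C G) (C G) := by rw [← hBQ]; exact hnonneg _
    have h1 : ∀ t : ℝ, 0 ≤ 2 * t * B (C Ft) (C G) + t ^ 2 * B (C G) (C G) := by
      intro t
      have hmem : Q3 (A⁻¹ * (Ft + t • G) * A⁻¹) ∈ {r : ℝ | ∃ Ft' : Matrix (Fin 3) (Fin 3) ℝ,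
          (∀ i j : Fin 2, Ft' (Fin.castSucc i) (Fin.castSucc j) = F i j) ∧
          r = Q3 (A⁻¹ * Ft' * A⁻¹)} := by
        refine ⟨Ft + t • G, fun i j => ?_, rfl⟩
        simp [Matrix.add_apply, hG i j, hFt i j]
      have := hlb hmem
      have hvv : Q3 (A⁻¹ * (Ft + t • G) * A⁻¹) = B (C (Ft + t • G)) (C (Ft + t • G)) := by
        rw [hBQ, hCapp]
      have hval' : Q2 F = B (C Ft) (C Ft) := by rw [hval, hBQ, hCapp]
      rw [hvv, hexp, hval'] at this
      linarith
    exact key _ _ hd h1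
  -- the restriction linear map
  set P : Matrix (Fin 3) (Fin 3) ℝ →ₗ[ℝ] Matrix (Fin 2) (Fin 2) ℝ :=
    { toFun := fun M => Matrix.of fun i j => M (Fin.castSucc i) (Fin.castSucc j)
      map_add' := fun _ _ => rfl
      map_smul' := fun _ _ => rfl } with hP
  set Pu : U →ₗ[ℝ] Matrix (Fin 2) (Fin 2) ℝ := P.comp U.subtype with hPu
  have hPusurj : LinearMap.range Pu = ⊤ := by
    rw [LinearMap.range_eq_top]
    intro F
    obtain ⟨M, hMU, hMF, -⟩ := hmemU F
    exact ⟨⟨M, hMU⟩, by ext i j; exact hMF i j⟩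
  obtain ⟨S, hS⟩ := LinearMap.exists_rightInverse_of_surjective Pu hPusurj
  have hSF : ∀ (F : Matrix (Fin 2) (Fin 2) ℝ) (i j : Fin 2),
      (S F : Matrix (Fin 3) (Fin 3) ℝ) (Fin.castSucc i) (Fin.castSucc j) = F i j := by
    intro F i j
    have : Pu (S F) = F := by
      have := congrArg (fun f => f F) (congrArg DFunLike.coe hS)
      simpa using this
    exact congrFun (congrFun (congrArg Matrix.of.symm this) i) j
  -- the value at S F
  have hQ2val : ∀ F : Matrix (Fin 2) (Fin 2) ℝ,
      Q2 F = B (C ((S F : Matrix (Fin 3) (Fin 3) ℝ))) (C ((S F : Matrix (Fin 3) (Fin 3) ℝ))) := by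
    intro F
    obtain ⟨M, hMU, hMF, hMval⟩ := hmemU F
    have hle : Q2 F ≤ B (C (S F : Matrix (Fin 3) (Fin 3) ℝ)) (C (S F : Matrix (Fin 3) (Fin 3) ℝ)) := by
      refine (hQ2 F).2 ⟨(S F : Matrix (Fin 3) (Fin 3) ℝ), hSF F, ?_⟩
      rw [hBQ, hCapp]
    have hge : B (C (S F : Matrix (Fin 3) (Fin 3) ℝ)) (C (S F : Matrix (Fin 3) (Fin 3) ℝ)) ≤ Q2 F := by
      set G := M - (S F : Matrix (Fin 3) (Fin 3) ℝ) with hG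
      have hGzero : ∀ i j : Fin 2, G (Fin.castSucc i) (Fin.castSucc j) = 0 := by
        intro i j
        simp [hG, Matrix.sub_apply, hMF i j, hSF F i j]
      have horth : B (C (S F : Matrix (Fin 3) (Fin 3) ℝ)) (C G) = 0 := (S F).2 G hGzero
      have hM : M = (S F : Matrix (Fin 3) (Fin 3) ℝ) + (1:ℝ) • G := by
        simp [hG]
      have hGnn : 0 ≤ B (C G) (C G) := by rw [← hBQ]; exact hnonneg _
      rw [hMval, hM, hexp]
      rw [horth]
      nlinarith
    linarith
  refine ⟨⟨B.compl₁₂ (C ∘ₗ U.subtype ∘ₗ S) (C ∘ₗ U.subtype ∘ₗ S), ?_, ?_⟩, ?_, ?_, ?_⟩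
  · intro X Y
    simp only [LinearMap.compl₁₂_apply, LinearMap.comp_apply]
    exact hBsymm _ _
  · intro F
    simp only [LinearMap.compl₁₂_apply, LinearMap.comp_apply]
    exact hQ2val F
  · -- nonneg
    intro F
    obtain ⟨⟨Ft, hFt, hval⟩, -⟩ := hQ2 F
    rw [hval]; exact hnonneg _
  · -- symmetric part
    intro F
    set Fs := (1/2 : ℝ) • (F + Fᵀ) with hFs
    have hset : {r : ℝ | ∃ Ft : Matrix (Fin 3) (Fin 3) ℝ,
        (∀ i j : Fin 2, Ft (Fin.castSucc i) (Fin.castSucc j) = F i j) ∧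
        r = Q3 (A⁻¹ * Ft * A⁻¹)} = {r : ℝ | ∃ Ft : Matrix (Fin 3) (Fin 3) ℝ,
        (∀ i j : Fin 2, Ft (Fin.castSucc i) (Fin.castSucc j) = Fs i j) ∧
        r = Q3 (A⁻¹ * Ft * A⁻¹)} := by
      ext r
      constructor
      · rintro ⟨Ft, hFt, rfl⟩
        refine ⟨(1/2 : ℝ) • (Ft + Ftᵀ), fun i j => ?_, ?_⟩
        · simp only [Matrix.smul_apply, Matrix.add_apply, Matrix.transpose_apply,
            hFt, hFs, smul_eq_mul]
          try ring
        · exact (hQ3conj _ _ (by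
            ext i j
            simp only [Matrix.smul_apply, Matrix.add_apply, Matrix.transpose_apply,
              smul_eq_mul]
            ring)).symm
      · rintro ⟨Ft, hFt, rfl⟩
        set E : Matrix (Fin 3) (Fin 3) ℝ := Matrix.of fun i j =>
          if h : (i : ℕ) < 2 ∧ (j : ℕ) < 2 then (F - Fs) ⟨i, h.1⟩ ⟨j, h.2⟩ else 0 with hE
        have hEapp : ∀ i j : Fin 2, E (Fin.castSucc i) (Fin.castSucc j) = (F - Fs) i j := by
          intro i j
          simp only [hE, Matrix.of_apply]
          rw [dif_pos ⟨i.isLt, j.isLt⟩]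
          congr 1 <;> exact Fin.ext (by simp)
        have hFsskew : ∀ i j : Fin 2, (F - Fs) i j + (F - Fs) j i = 0 := by
          intro i j
          simp only [Matrix.sub_apply, hFs, Matrix.smul_apply, Matrix.add_apply,
            Matrix.transpose_apply, smul_eq_mul]
          ring
        refine ⟨Ft + E, fun i j => ?_, ?_⟩
        · simp [Matrix.add_apply, hFt i j, hEapp i j, Matrix.sub_apply]
        · refine hQ3conj _ _ ?_
          ext i j
          simp only [Matrix.smul_apply, Matrix.add_apply, Matrix.transpose_apply,
            smul_eq_mul]
          have hEskew : E i j + E j i = 0 := by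
            by_cases h : (i : ℕ) < 2 ∧ (j : ℕ) < 2
            · simp only [hE, Matrix.of_apply, dif_pos h, dif_pos (And.intro h.2 h.1)]
              exact hFsskew ⟨i, h.1⟩ ⟨j, h.2⟩
            · have h' : ¬((j : ℕ) < 2 ∧ (i : ℕ) < 2) := fun hh => h ⟨hh.2, hh.1⟩
              simp only [hE, Matrix.of_apply, dif_neg h, dif_neg h', add_zero]
          linarith [hEskew]
    have h1 := hQ2 F
    have h2 := hQ2 Fs
    rw [← hset] at h2
    exact h1.unique h2
  · -- positive definite
    intro F hFsym hFne
    obtain ⟨⟨Ft, hFt, hval⟩, -⟩ := hQ2 F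
    have hnn : 0 ≤ Q2 F := by rw [hval]; exact hnonneg _
    rcases hnn.lt_or_eq with h | h
    · exact h
    exfalso
    have h0 : Q3 (A⁻¹ * Ft * A⁻¹) = 0 := by rw [← hval, ← h]
    set Y := A⁻¹ * ((1/2 : ℝ) • (Ft + Ftᵀ)) * A⁻¹ with hY
    have hQY : Q3 Y = 0 := by
      rw [hY, ← hconjsym, ← hsym, h0]
    have hYsym : Yᵀ = Y := by
      rw [hY, ← hconjsym]
      rw [Matrix.transpose_smul, Matrix.transpose_add, Matrix.transpose_transpose]
      rw [add_comm]
    have hY0 : Y = 0 := by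
      by_contra hY0
      exact absurd hQY (hposdef Y hYsym hY0).ne'
    have hFtsym : (1/2 : ℝ) • (Ft + Ftᵀ) = 0 := by
      have : A * Y * A = (1/2 : ℝ) • (Ft + Ftᵀ) := by
        rw [hY]
        rw [show A * (A⁻¹ * ((1/2 : ℝ) • (Ft + Ftᵀ)) * A⁻¹) * A
          = (A * A⁻¹) * ((1/2 : ℝ) • (Ft + Ftᵀ)) * (A⁻¹ * A) by
            simp only [Matrix.mul_assoc], hA1, hA2, Matrix.one_mul, Matrix.mul_one]
      rw [← this, hY0, Matrix.mul_zero, Matrix.zero_mul]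
    apply hFne
    ext i j
    have h1 : Ft (Fin.castSucc i) (Fin.castSucc j) + Ft (Fin.castSucc j) (Fin.castSucc i) = 0 := by
      have := congrFun (congrFun hFtsym (Fin.castSucc i)) (Fin.castSucc j)
      simp only [Matrix.smul_apply, Matrix.add_apply, Matrix.transpose_apply,
        smul_eq_mul, Matrix.zero_apply] at this
      linarith
    rw [hFt i j, hFt j i] at h1
    have h2 : F j i = F i j := by
      have := congrFun (congrFun hFsym i) j
      simpa using this
    rw [h2] at h1
    simp only [Matrix.zero_apply]
    linarith
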